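/- Let A = Σ_{j=1}^n λ_j u_j^{∘k} be odeco with orthonormal basis u_j of R^n, λ_j ≠ 0 for j ≤ r and λ_j = 0 for j > r, and V = [u_1 ... u_r]. Then for every x ∈ R^n, V^T (A x^{k-1}) = A_red (V^T x)^{k-1}, where A_red = A ×_1 V^T ×_2 ... ×_k V^T. That is, the projection z = V^T x intertwines the original dynamics ẋ = A x^{k-1} with the reduced dynamics ż = A_red z^{k-1}. -/

import Mathlib

open Finset

/-- For a `(k+1)`-th order cubical tensor `A` on `ℝ^m`, the contraction
`A ×₁ x ×₂ x ⋯ ×ₖ x ∈ ℝ^m` along the first `k` modes. -/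
def tvp {m k : ℕ} (A : (Fin (k + 1) → Fin m) → ℝ) (x : Fin m → ℝ) : Fin m → ℝ :=
  fun i => ∑ j : Fin k → Fin m, A (Fin.snoc j i) * ∏ p, x (j p)

/-- The Tucker product `A ×₁ M ×₂ M ⋯ ×_{k+1} M` with the same matrix `M : r × n`
along every mode. -/
def tuckerMap {n r k : ℕ} (A : (Fin (k + 1) → Fin n) → ℝ) (M : Fin r → Fin n → ℝ) :
    (Fin (k + 1) → Fin r) → ℝ :=
  fun i => ∑ j : Fin (k + 1) → Fin n, A j * ∏ p, M (i p) (j p)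

/-- Let `A = ∑_j lam j • u_j^{∘(k+1)}` be odeco with orthonormal basis `u_j`,
`lam j ≠ 0` for `j ≤ r` and `lam j = 0` for `j > r`, and `V = [u_1 ⋯ u_r]`.
Then for every `x ∈ ℝ^n`, `Vᵀ (A x^k) = A_red (Vᵀ x)^k`, where
`A_red = A ×₁ Vᵀ ⋯ ×_{k+1} Vᵀ`: the projection `z = Vᵀ x` intertwines the original
dynamics `ẋ = A x^k` with the reduced dynamics `ż = A_red z^k`. -/
theorem reduced_dynamics_intertwine {n r k : ℕ} (hr : r ≤ n)
    (lam : Fin n → ℝ) (u : Fin n → Fin n → ℝ)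
    (hortho : ∀ a b, ∑ i, u a i * u b i = if a = b then (1 : ℝ) else 0)
    (A : (Fin (k + 1) → Fin n) → ℝ)
    (hA : ∀ j, A j = ∑ a, lam a * ∏ p, u a (j p))
    (hzero : ∀ a : Fin n, r ≤ (a : ℕ) → lam a = 0)
    (hnonzero : ∀ b : Fin r, lam (Fin.castLE hr b) ≠ 0)
    (x : Fin n → ℝ) (b : Fin r) :
    ∑ a, u (Fin.castLE hr b) a * tvp A x a
      = tvp (tuckerMap A (fun b' a => u (Fin.castLE hr b') a))
          (fun b' => ∑ a, u (Fin.castLE hr b') a * x a) b := by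
  classical
  set B := Fin.castLE hr b with hB
  have hsnoc : ∀ {α : Type} (m : ℕ) (f : α → ℝ) (j : Fin m → α) (a : α),
      ∏ p : Fin (m + 1), f ((Fin.snoc j a : Fin (m + 1) → α) p) = (∏ p : Fin m, f (j p)) * f a := by
    intro α m f j a
    rw [Fin.prod_univ_castSucc]
    simp
  -- left-hand side
  have L : ∑ a, u B a * tvp A x a = lam B * ∏ _p : Fin k, ∑ a, u B a * x a := by
    have step1 : ∑ a, u B a * tvp A x a
        = ∑ j : Fin k → Fin n, ∑ c, (∑ a, u B a * u c a)
            * (lam c * ∏ p : Fin k, (u c (j p) * x (j p))) := by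
      simp only [tvp, Finset.mul_sum]
      rw [Finset.sum_comm]
      refine Finset.sum_congr rfl fun j _ => ?_
      simp only [hA, Finset.sum_mul, Finset.mul_sum]
      rw [Finset.sum_comm]
      refine Finset.sum_congr rfl fun c _ => ?_
      refine Finset.sum_congr rfl fun a _ => ?_
      rw [hsnoc k (u c) j a, Finset.prod_mul_distrib]
      ring
    rw [step1]
    have step2 : ∀ j : Fin k → Fin n,
        ∑ c, (∑ a, u B a * u c a) * (lam c * ∏ p : Fin k, (u c (j p) * x (j p)))
          = lam B * ∏ p : Fin k, (u B (j p) * x (j p)) := by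
      intro j
      have h1 : ∀ c, (∑ a, u B a * u c a) = if B = c then (1:ℝ) else 0 := fun c => hortho B c
      simp only [h1, ite_mul, one_mul, zero_mul]
      rw [Finset.sum_ite_eq]
      simp
    simp only [step2]
    rw [← Finset.mul_sum]
    congr 1
    rw [Fintype.prod_sum (fun (_ : Fin k) (a : Fin n) => u B a * x a)]
  rw [L]
  -- the Tucker core in terms of deltas
  have hT : ∀ i : Fin (k + 1) → Fin r,
      tuckerMap A (fun b' a => u (Fin.castLE hr b') a) i
        = ∑ c, lam c * ∏ p, (if c = Fin.castLE hr (i p) then (1:ℝ) else 0) := by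
    intro i
    simp only [tuckerMap, hA, Finset.sum_mul]
    rw [Finset.sum_comm]
    refine Finset.sum_congr rfl fun c _ => ?_
    have h2 : ∀ J : Fin (k+1) → Fin n,
        lam c * (∏ p, u c (J p)) * ∏ p, u (Fin.castLE hr (i p)) (J p)
          = lam c * ∏ p, (u c (J p) * u (Fin.castLE hr (i p)) (J p)) := by
      intro J
      rw [Finset.prod_mul_distrib]; ring
    simp only [h2]
    rw [← Finset.mul_sum,
      ← Fintype.prod_sum (fun (p : Fin (k+1)) (a : Fin n) => u c a * u (Fin.castLE hr (i p)) a)]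
    congr 1
    exact Finset.prod_congr rfl fun p _ => hortho c _
  -- right-hand side
  simp only [tvp, hT]
  have h3 : ∀ (j : Fin k → Fin r),
      (∑ c, lam c * ∏ p : Fin (k+1), (if c = Fin.castLE hr ((Fin.snoc j b : Fin (k + 1) → Fin r) p) then (1:ℝ) else 0))
        = lam B * ∏ p : Fin k, (if B = Fin.castLE hr (j p) then (1:ℝ) else 0) := by
    intro j
    have h4 : ∀ c : Fin n,
        ∏ p : Fin (k+1), (if c = Fin.castLE hr ((Fin.snoc j b : Fin (k + 1) → Fin r) p) then (1:ℝ) else 0)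
          = (∏ p : Fin k, (if c = Fin.castLE hr (j p) then (1:ℝ) else 0))
              * (if c = B then 1 else 0) := by
      intro c
      have := hsnoc k (fun b' : Fin r => if c = Fin.castLE hr b' then (1:ℝ) else 0) j b
      simpa using this
    simp only [h4]
    have h5 : ∀ c : Fin n,
        lam c * ((∏ p : Fin k, (if c = Fin.castLE hr (j p) then (1:ℝ) else 0))
            * (if c = B then (1:ℝ) else 0))
          = if c = B then lam c * ∏ p : Fin k, (if c = Fin.castLE hr (j p) then (1:ℝ) else 0)
            else 0 := by
      intro c
      by_cases hc : c = B <;> simp [hc]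
    simp only [h5]
    rw [Finset.sum_ite_eq']
    simp
  simp only [h3]
  have h6 : ∀ (j : Fin k → Fin r),
      lam B * (∏ p : Fin k, (if B = Fin.castLE hr (j p) then (1:ℝ) else 0))
          * ∏ p : Fin k, (∑ a, u (Fin.castLE hr (j p)) a * x a)
        = lam B * ∏ p : Fin k,
            ((if B = Fin.castLE hr (j p) then (1:ℝ) else 0)
              * ∑ a, u (Fin.castLE hr (j p)) a * x a) := by
    intro j
    rw [Finset.prod_mul_distrib]; ring
  simp only [h6]
  rw [← Finset.mul_sum,
    ← Fintype.prod_sum (fun (_ : Fin k) (c : Fin r) =>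
      (if B = Fin.castLE hr c then (1:ℝ) else 0) * ∑ a, u (Fin.castLE hr c) a * x a)]
  congr 1
  refine Finset.prod_congr rfl fun p _ => ?_
  have h7 : ∀ c : Fin r, (if B = Fin.castLE hr c then (1:ℝ) else 0) = if b = c then 1 else 0 := by
    intro c
    rw [hB]
    simp [Fin.castLE_inj]
  simp only [h7, ite_mul, one_mul, zero_mul]
  rw [Finset.sum_ite_eq]
  simp
  rfl
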